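/- Let m, m12 be positive integers and n = m·m12; identify Fin n with Fin m × Fin m12. For ζ : Fin m → ℂ let N(ζ) : Fin 2 → Fin n → Fin n → ℂ be the tensor whose slice N(ζ) 0 is the identity matrix and whose slice N(ζ) 1 is the diagonal matrix whose diagonal entry at position (i,p) is ζ i (i.e. the block-diagonal pencil ⊞_{i=1}^m (v0 + ζ_i v1)·Id_{m12}). Then TNS(m,m12,m; 2,n,n) equals the Euclidean closure of the set of tensors T with T a b c = ∑_{b',c'} g1 b b' · g2 c c' · N(ζ) a b' c' for some ζ : Fin m → ℂ and some matrices g1, g2 ∈ Matrix (Fin n) (Fin n) ℂ (equivalently, with g1, g2 ranging only over invertible matrices). -/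

import Mathlib

open scoped BigOperators

noncomputable section

/-- Parametrized triangle tensor network tensors. -/
def tnsSet (m01 m12 m02 n0 n1 n2 : ℕ) :
    Set (Fin n0 → Fin n1 → Fin n2 → ℂ) :=
  {T | ∃ (X0 : Fin n0 → Fin m01 × Fin m02 → ℂ)
        (X1 : Fin n1 → Fin m01 × Fin m12 → ℂ)
        (X2 : Fin n2 → Fin m12 × Fin m02 → ℂ),
      ∀ a b c, T a b c =
        ∑ i : Fin m01, ∑ j : Fin m12, ∑ k : Fin m02,
          X0 a (i, k) * X1 b (i, j) * X2 c (j, k)}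

/-- The triangle tensor network variety: Euclidean closure of the parametrized set. -/
def TNS (m01 m12 m02 n0 n1 n2 : ℕ) : Set (Fin n0 → Fin n1 → Fin n2 → ℂ) :=
  closure (tnsSet m01 m12 m02 n0 n1 n2)

/-- The vanishing ideal of a subset of an affine space over ℂ. -/
def vanishingIdeal' {ι : Type*} (Z : Set (ι → ℂ)) : Ideal (MvPolynomial ι ℂ) where
  carrier := {p | ∀ z ∈ Z, MvPolynomial.eval z p = 0}
  zero_mem' := by intro z _; simp
  add_mem' := by
    intro a b ha hb z hz
    simp [map_add, ha z hz, hb z hz]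
  smul_mem' := by
    intro c a ha z hz
    simp [smul_eq_mul, ha z hz]

/-- Affine dimension of a set of coordinate tensors. -/
def affineDim {n0 n1 n2 : ℕ} (Z : Set (Fin n0 → Fin n1 → Fin n2 → ℂ)) : WithBot ℕ∞ :=
  ringKrullDim (MvPolynomial (Fin n0 × Fin n1 × Fin n2) ℂ ⧸
    vanishingIdeal' ((fun T (p : Fin n0 × Fin n1 × Fin n2) => T p.1 p.2.1 p.2.2) '' Z))

/-- The pencil `⊞_{i=1}^m (v0 + ζ_i v1)·Id_{m12}`: slice 0 is the identity matrix,
slice 1 is the diagonal matrix with entry `ζ i` at position `(i,p)`. -/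
def diagPencil (m m12 : ℕ) (ζ : Fin m → ℂ) :
    Fin 2 → Fin (m * m12) → Fin (m * m12) → ℂ := fun a b c =>
  if b = c then (if a = 0 then 1 else ζ (finProdFinEquiv.symm b).1) else 0


namespace TNSAux

open Polynomial Matrix Filter Topology

lemma eval_charpoly' {k : Type*} [Fintype k] [DecidableEq k]
    (M : Matrix k k ℂ) (t : ℂ) :
    M.charpoly.eval t = (t • (1 : Matrix k k ℂ) - M).det := by
  rw [Matrix.charpoly, ← Polynomial.coe_evalRingHom, RingHom.map_det]
  congr 1
  ext i j
  by_cases h : i = j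
  · subst h; simp [Matrix.charmatrix_apply_eq, Matrix.one_apply]
  · simp [Matrix.charmatrix_apply_ne _ _ _ h, Matrix.one_apply_ne h]

lemma charpoly_conj {k : Type*} [Fintype k] [DecidableEq k]
    (P M : Matrix k k ℂ) (hP : IsUnit P) :
    (P * M * P⁻¹).charpoly = M.charpoly := by
  have hPd : IsUnit P.det := (Matrix.isUnit_iff_isUnit_det P).mp hP
  have h1 : P * P⁻¹ = 1 := Matrix.mul_nonsing_inv P hPd
  have key : Matrix.charmatrix (P * M * P⁻¹) =
      (P.map (Polynomial.C : ℂ →+* ℂ[X])) * Matrix.charmatrix M *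
        ((P⁻¹).map (Polynomial.C : ℂ →+* ℂ[X])) := by
    have hCmul : ∀ (A B : Matrix k k ℂ),
        (A * B).map (Polynomial.C : ℂ →+* ℂ[X]) =
          A.map (Polynomial.C : ℂ →+* ℂ[X]) * B.map (Polynomial.C : ℂ →+* ℂ[X]) := by
      intro A B
      exact Matrix.map_mul
    have h1' : (P.map (Polynomial.C : ℂ →+* ℂ[X])) * ((P⁻¹).map (Polynomial.C : ℂ →+* ℂ[X]))
        = 1 := by
      rw [← hCmul, h1]; simp
    unfold Matrix.charmatrix
    rw [mul_sub, sub_mul]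
    congr 1
    · -- scalar part
      have : (Matrix.scalar k (X : ℂ[X])) = (X : ℂ[X]) • (1 : Matrix k k ℂ[X]) := by
        ext i j; by_cases h : i = j <;> simp [h, Matrix.one_apply]
      rw [this]
      rw [Matrix.mul_smul, Matrix.mul_one, Matrix.smul_mul, h1']
    · show (RingHom.mapMatrix (Polynomial.C : ℂ →+* ℂ[X])) (P * M * P⁻¹) = _
      rw [_root_.map_mul, _root_.map_mul]
      simp only [RingHom.mapMatrix_apply]
  rw [Matrix.charpoly, Matrix.charpoly, key, Matrix.det_mul, Matrix.det_mul]
  have : (P.map (Polynomial.C : ℂ →+* ℂ[X])).det * ((P⁻¹).map (Polynomial.C : ℂ →+* ℂ[X])).det = 1 := by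
    rw [← Matrix.det_mul, ← Matrix.map_mul, h1]; simp
  calc (P.map (Polynomial.C : ℂ →+* ℂ[X])).det * (Matrix.charmatrix M).det *
        ((P⁻¹).map (Polynomial.C : ℂ →+* ℂ[X])).det
      = (Matrix.charmatrix M).det * ((P.map (Polynomial.C : ℂ →+* ℂ[X])).det *
        ((P⁻¹).map (Polynomial.C : ℂ →+* ℂ[X])).det) := by ring
    _ = (Matrix.charmatrix M).det := by rw [this, mul_one]

/-- distinct charpoly roots implies diagonalizable -/
lemma diag_of_distinct_roots {k : ℕ} (M : Matrix (Fin k) (Fin k) ℂ)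
    (μ : Fin k → ℂ) (hμ : Function.Injective μ)
    (h : M.charpoly = ∏ i, (X - Polynomial.C (μ i))) :
    ∃ (P : Matrix (Fin k) (Fin k) ℂ) (d : Fin k → ℂ),
      IsUnit P ∧ M = P * Matrix.diagonal d * P⁻¹ := by
  -- eigenvectors
  have hev : ∀ i : Fin k, ∃ v : Fin k → ℂ, v ≠ 0 ∧ M.mulVec v = μ i • v := by
    intro i
    have hdet : (μ i • (1 : Matrix (Fin k) (Fin k) ℂ) - M).det = 0 := by
      rw [← eval_charpoly', h]
      simp only [eval_prod, eval_sub, eval_X, eval_C]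
      exact Finset.prod_eq_zero (Finset.mem_univ i) (by ring)
    obtain ⟨v, hv0, hv⟩ := (Matrix.exists_mulVec_eq_zero_iff).mpr hdet
    refine ⟨v, hv0, ?_⟩
    have := hv
    rw [Matrix.sub_mulVec, sub_eq_zero] at this
    rw [← this, Matrix.smul_mulVec, Matrix.one_mulVec]
  choose v hv0 hvm using hev
  -- linear independence
  have hli : LinearIndependent ℂ v := by
    apply Module.End.eigenvectors_linearIndependent' (Matrix.mulVecLin M) μ hμ v
    intro i
    constructor
    · rw [Module.End.mem_eigenspace_iff]
      simpa using hvm i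
    · exact hv0 i
  set P : Matrix (Fin k) (Fin k) ℂ := (Matrix.of v)ᵀ with hP
  have hPcols : ∀ i, Pᵀ i = v i := by intro i; rw [hP, Matrix.transpose_transpose]; rfl
  have hPu : IsUnit P := by
    rw [← Matrix.linearIndependent_cols_iff_isUnit]
    simpa [show P.col = v from funext hPcols] using hli
  have hPd : IsUnit P.det := (Matrix.isUnit_iff_isUnit_det P).mp hPu
  refine ⟨P, μ, hPu, ?_⟩
  have key : M * P = P * Matrix.diagonal μ := by
    ext r i
    rw [Matrix.mul_apply, Matrix.mul_diagonal]
    have : ∑ s, M r s * P s i = (M.mulVec (v i)) r := by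
      simp [Matrix.mulVec, dotProduct, hP, mul_comm]
    rw [this, hvm i]
    simp [hP, mul_comm]
  calc M = M * P * P⁻¹ := by rw [mul_assoc, Matrix.mul_nonsing_inv P hPd, mul_one]
  _ = P * Matrix.diagonal μ * P⁻¹ := by rw [key]

instance matFC {m n R : Type*} [Countable m] [Countable n] [TopologicalSpace R]
    [FirstCountableTopology R] :
    FirstCountableTopology (Matrix m n R) :=
  (inferInstance : FirstCountableTopology (m → n → R))

def Good (k : ℕ) : Set (Matrix (Fin k) (Fin k) ℂ) :=
  {M | ∃ μ : Fin k → ℂ, Function.Injective μ ∧ M.charpoly = ∏ i, (X - Polynomial.C (μ i))}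

/-- helper: picking small real numbers avoiding a finite bad set -/
lemma exists_small_avoid (S : Set ℝ) (hS : S.Finite) (n : ℕ) :
    ∃ r : ℝ, 0 < r ∧ r < 1/(n+1) ∧ r ∉ S := by
  have h1 : (0:ℝ) < 1/(n+1) := by positivity
  obtain ⟨r, hr⟩ := ((Set.Ioo_infinite h1).diff hS).nonempty
  exact ⟨r, hr.1.1, hr.1.2, hr.2⟩

lemma tendsto_of_small {r : ℕ → ℝ} (h0 : ∀ n, 0 < r n) (h1 : ∀ n, r n < 1/(n+1)) :
    Tendsto r atTop (𝓝 0) := by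
  have := tendsto_one_div_add_atTop_nhds_zero_nat (𝕜 := ℝ)
  refine tendsto_of_tendsto_of_tendsto_of_le_of_le tendsto_const_nhds this
    (fun n => (h0 n).le) (fun n => ?_)
  have := h1 n; rw [one_div] at this ⊢; push_cast at this ⊢; linarith

lemma good_dense (k : ℕ) (C : Matrix (Fin k) (Fin k) ℂ) : C ∈ closure (Good k) := by
  induction k with
  | zero =>
    apply subset_closure
    exact ⟨fun i => i.elim0, fun i => i.elim0, by
      simp [Matrix.charpoly, Matrix.det_isEmpty]⟩
  | succ k ih =>
    -- eigenvector
    obtain ⟨lam, hlam⟩ := Module.End.exists_eigenvalue (Matrix.mulVecLin C)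
    obtain ⟨v, hv⟩ := hlam.exists_hasEigenvector
    have hv0 : v ≠ 0 := hv.right
    have hvm : C.mulVec v = lam • v := by
      have := hv.apply_eq_smul; simpa using this
    obtain ⟨i₀, hi₀⟩ := Function.ne_iff.mp hv0
    simp only [Pi.zero_apply] at hi₀
    set P₀ : Matrix (Fin (k+1)) (Fin (k+1)) ℂ := Matrix.updateCol 1 i₀ v with hP₀
    have hdet : P₀.det = v i₀ := by
      rw [hP₀, ← Matrix.cramer_apply, Matrix.cramer_one]; rfl
    have hP₀d : IsUnit P₀.det := by rw [hdet]; exact (isUnit_iff_ne_zero).mpr hi₀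
    have hP₀u : IsUnit P₀ := (Matrix.isUnit_iff_isUnit_det P₀).mpr hP₀d
    have hPinv : P₀ * P₀⁻¹ = 1 := Matrix.mul_nonsing_inv P₀ hP₀d
    have hinvP : P₀⁻¹ * P₀ = 1 := Matrix.nonsing_inv_mul P₀ hP₀d
    set E : Matrix (Fin (k+1)) (Fin (k+1)) ℂ := P₀⁻¹ * C * P₀ with hE
    -- column fact: E _ i₀ = lam * δ
    have hcole : ∀ r, E r i₀ = if r = i₀ then lam else 0 := by
      intro r
      have h1 : (C * P₀) *ᵥ (Pi.single i₀ 1 : Fin (k+1) → ℂ) = lam • v := by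
        rw [← Matrix.mulVec_mulVec]
        have : P₀ *ᵥ (Pi.single i₀ 1 : Fin (k+1) → ℂ) = v := by
          ext r'
          simp [Matrix.mulVec_single, hP₀, Matrix.updateCol_apply]
        rw [this, hvm]
      have h2 : E *ᵥ (Pi.single i₀ 1 : Fin (k+1) → ℂ) = lam • (Pi.single i₀ 1 : Fin (k+1) → ℂ) := by
        have hPv : P₀⁻¹ *ᵥ v = Pi.single i₀ 1 := by
          have : P₀ *ᵥ (Pi.single i₀ 1 : Fin (k+1) → ℂ) = v := by
            ext r'
            simp [Matrix.mulVec_single, hP₀, Matrix.updateCol_apply]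
          rw [← this, Matrix.mulVec_mulVec, hinvP, Matrix.one_mulVec]
        rw [hE, mul_assoc, ← Matrix.mulVec_mulVec, h1, Matrix.mulVec_smul, hPv]
      have := congrFun h2 r
      simpa [Matrix.mulVec_single, Pi.single_apply, eq_comm] using this
    -- reindexing equivalence
    set e : Fin (k+1) ≃ Unit ⊕ Fin k :=
      (finSuccEquiv' i₀).trans ((Equiv.optionEquivSumPUnit.{0} (Fin k)).trans
        (Equiv.sumComm (Fin k) Unit)) with he_def
    have he_i₀ : e i₀ = Sum.inl Unit.unit := by
      simp [he_def, finSuccEquiv'_at]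
    have hsymm_inl : ∀ u, e.symm (Sum.inl u) = i₀ := by
      intro u; rw [← he_i₀, Equiv.symm_apply_apply]
    have hsymm_inr : ∀ j, e.symm (Sum.inr j) ≠ i₀ := by
      intro j h
      have := congrArg e h
      rw [Equiv.apply_symm_apply, he_i₀] at this
      exact Sum.inr_ne_inl this
    set E' : Matrix (Unit ⊕ Fin k) (Unit ⊕ Fin k) ℂ := Matrix.reindex e e E with hE'def
    set W : Matrix Unit (Fin k) ℂ := E'.toBlocks₁₂ with hW
    set C' : Matrix (Fin k) (Fin k) ℂ := E'.toBlocks₂₂ with hC'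
    have hE' : E' = Matrix.fromBlocks (Matrix.diagonal (fun _ : Unit => lam)) W 0 C' := by
      ext r c
      rcases r with u | j <;> rcases c with u' | j'
      · rcases u; rcases u'
        have h1 : E' (Sum.inl Unit.unit) (Sum.inl Unit.unit) = lam := by
          rw [hE'def]
          simp only [Matrix.reindex_apply, Matrix.submatrix_apply, hsymm_inl]
          rw [hcole i₀, if_pos rfl]
        rw [h1]
        simp [Matrix.fromBlocks, Matrix.diagonal]
      · rcases u; rfl
      · have h1 : E' (Sum.inr j) (Sum.inl u') = 0 := by
          rw [hE'def]
          simp only [Matrix.reindex_apply, Matrix.submatrix_apply, hsymm_inl]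
          rw [hcole _, if_neg (hsymm_inr j)]
        rw [h1]; rcases u'; rfl
      · rfl
    set Φ : ℂ × Matrix (Fin k) (Fin k) ℂ → Matrix (Fin (k+1)) (Fin (k+1)) ℂ := fun p =>
      P₀ * (Matrix.reindex e.symm e.symm
        (Matrix.fromBlocks (Matrix.diagonal (fun _ : Unit => p.1)) W 0 p.2)) * P₀⁻¹ with hΦdef
    have hΦC : Φ (lam, C') = C := by
      rw [hΦdef]
      simp only [← hE']
      have h2 : Matrix.reindex e.symm e.symm E' = E := by
        rw [hE'def, ← Matrix.reindex_symm]
        exact (Matrix.reindex e e).symm_apply_apply E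
      rw [h2, hE]
      have h3 : P₀ * (P₀⁻¹ * C * P₀) * P₀⁻¹ = (P₀ * P₀⁻¹) * C * (P₀ * P₀⁻¹) := by
        simp only [mul_assoc]
      rw [h3, hPinv, one_mul, mul_one]
    have hΦcont : Continuous Φ := by
      refine ((continuous_const.matrix_mul ?_).matrix_mul continuous_const)
      refine Continuous.matrix_reindex ?_ _ _
      exact Continuous.matrix_fromBlocks
        (Continuous.matrix_diagonal (continuous_pi fun _ => continuous_fst))
        continuous_const continuous_const continuous_snd
    have himg : ∀ (t : ℂ) (M : Matrix (Fin k) (Fin k) ℂ) (μ : Fin k → ℂ),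
        Function.Injective μ → M.charpoly = ∏ i, (X - Polynomial.C (μ i)) →
        (∀ i, t ≠ μ i) → Φ (t, M) ∈ Good (k+1) := by
      intro t M μ hinj hchar hne
      refine ⟨Fin.cons t μ, ?_, ?_⟩
      · rw [Fin.cons_injective_iff]
        exact ⟨by rintro ⟨i, rfl⟩; exact hne i rfl, hinj⟩
      · have h1 : (Φ (t, M)).charpoly =
            (Matrix.reindex e.symm e.symm
              (Matrix.fromBlocks (Matrix.diagonal (fun _ : Unit => t)) W 0 M)).charpoly :=
          charpoly_conj _ _ hP₀u
        rw [h1, Matrix.charpoly_reindex, Matrix.charpoly_fromBlocks_zero₂₁]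
        have h2 : (Matrix.diagonal (fun _ : Unit => t)).charpoly = X - Polynomial.C t := by
          rw [Matrix.charpoly, Matrix.det_unique]
          simp [Matrix.charmatrix_apply_eq]
        rw [h2, hchar, Fin.prod_univ_succ]
        simp [Fin.cons_zero, Fin.cons_succ]
    -- approximate (lam, C')
    obtain ⟨x, hxg, hx⟩ := mem_closure_iff_seq_limit.mp (ih C')
    choose μs hμinj hμchar using hxg
    have hbad : ∀ n : ℕ, ({r : ℝ | ∃ i, lam + (r:ℂ) = μs n i}).Finite := by
      intro n
      have : {r : ℝ | ∃ i, lam + (r:ℂ) = μs n i} =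
          (fun r : ℝ => lam + (r:ℂ)) ⁻¹' (Set.range (μs n)) := by
        ext r; simp only [Set.mem_preimage, Set.mem_range, Set.mem_setOf_eq]
        exact ⟨fun ⟨i, h⟩ => ⟨i, h.symm⟩, fun ⟨i, h⟩ => ⟨i, h.symm⟩⟩
      rw [this]
      apply Set.Finite.preimage _ (Set.finite_range _)
      exact ((add_right_injective lam).comp Complex.ofReal_injective).injOn
    have hpick : ∀ n : ℕ, ∃ r : ℝ, 0 < r ∧ r < 1/(n+1) ∧
        r ∉ {r : ℝ | ∃ i, lam + (r:ℂ) = μs n i} :=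
      fun n => exists_small_avoid _ (hbad n) n
    choose r hr0 hr1 hrS using hpick
    have hrt : Tendsto r atTop (𝓝 0) := tendsto_of_small hr0 hr1
    set t : ℕ → ℂ := fun n => lam + (r n : ℂ) with ht
    have htt : Tendsto t atTop (𝓝 lam) := by
      have h1 : Tendsto (fun n => ((r n : ℝ) : ℂ)) atTop (𝓝 0) := by
        have := (Complex.continuous_ofReal.tendsto 0).comp hrt
        simpa [Function.comp_def] using this
      have := h1.const_add lam
      simpa using this
    have hseq : Tendsto (fun n => Φ (t n, x n)) atTop (𝓝 (Φ (lam, C'))) :=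
      (hΦcont.tendsto _).comp (htt.prodMk_nhds hx)
    rw [hΦC] at hseq
    refine mem_closure_of_tendsto hseq (Filter.Eventually.of_forall fun n => ?_)
    refine himg (t n) (x n) (μs n) (hμinj n) (hμchar n) ?_
    intro i hti
    exact hrS n ⟨i, hti⟩

def DiagSet (k : ℕ) : Set (Matrix (Fin k) (Fin k) ℂ) :=
  {M | ∃ P d, IsUnit P ∧ M = P * Matrix.diagonal d * P⁻¹}

lemma diag_dense (k : ℕ) (C : Matrix (Fin k) (Fin k) ℂ) : C ∈ closure (DiagSet k) :=
  closure_mono (fun M hM => by obtain ⟨μ, h1, h2⟩ := hM; exact diag_of_distinct_roots M μ h1 h2) (good_dense k C)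

def PairSet (k : ℕ) : Set (Matrix (Fin k) (Fin k) ℂ × Matrix (Fin k) (Fin k) ℂ) :=
  {p | ∃ Q R d, p = (Q * R, Q * Matrix.diagonal d * R)}

lemma pair_dense_of_unit {k : ℕ} (A B : Matrix (Fin k) (Fin k) ℂ) (hA : IsUnit A) :
    (A, B) ∈ closure (PairSet k) := by
  have hAd : IsUnit A.det := (Matrix.isUnit_iff_isUnit_det A).mp hA
  have hA1 : A * A⁻¹ = 1 := Matrix.mul_nonsing_inv A hAd
  set Ψ : Matrix (Fin k) (Fin k) ℂ → Matrix (Fin k) (Fin k) ℂ × Matrix (Fin k) (Fin k) ℂ :=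
    fun M => (A, A * M) with hΨ
  have hcont : Continuous Ψ :=
    continuous_const.prodMk (continuous_const.matrix_mul continuous_id)
  have himg : Ψ '' DiagSet k ⊆ PairSet k := by
    rintro _ ⟨M, ⟨P, d, hPu, rfl⟩, rfl⟩
    have hPd : IsUnit P.det := (Matrix.isUnit_iff_isUnit_det P).mp hPu
    refine ⟨A * P, P⁻¹, d, ?_⟩
    have h1 : A * P * P⁻¹ = A := by
      rw [mul_assoc, Matrix.mul_nonsing_inv P hPd, mul_one]
    have h2 : A * (P * Matrix.diagonal d * P⁻¹) = A * P * Matrix.diagonal d * P⁻¹ := by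
      simp only [mul_assoc]
    rw [hΨ]
    simp only [h2, h1]
  have hmem : Ψ (A⁻¹ * B) = (A, B) := by
    rw [hΨ]
    simp only [← mul_assoc, hA1, one_mul]
  rw [← hmem]
  have := Set.mem_image_of_mem Ψ (diag_dense k (A⁻¹ * B))
  exact closure_mono himg (image_closure_subset_closure_image hcont this)

lemma pair_dense {k : ℕ} (A B : Matrix (Fin k) (Fin k) ℂ) :
    (A, B) ∈ closure (PairSet k) := by
  have hbad : ({r : ℝ | (A - (r:ℂ) • 1).det = 0}).Finite := by
    have hsub : {r : ℝ | (A - (r:ℂ) • 1).det = 0} ⊆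
        (fun r : ℝ => (r : ℂ)) ⁻¹' {z | A.charpoly.IsRoot z} := by
      intro r hr
      simp only [Set.mem_setOf_eq] at hr ⊢
      rw [Set.mem_preimage, Set.mem_setOf_eq, IsRoot, eval_charpoly']
      have : ((r:ℂ) • (1 : Matrix (Fin k) (Fin k) ℂ) - A) = -(A - (r:ℂ) • 1) := (neg_sub _ _).symm
      rw [this, Matrix.det_neg, hr, mul_zero]
    refine Set.Finite.subset ?_ hsub
    exact (Polynomial.finite_setOf_isRoot (A.charpoly_monic.ne_zero)).preimage
      Complex.ofReal_injective.injOn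
  have hpick : ∀ n : ℕ, ∃ r : ℝ, 0 < r ∧ r < 1/(n+1) ∧
      r ∉ {r : ℝ | (A - (r:ℂ) • 1).det = 0} := fun n => exists_small_avoid _ hbad n
  choose r hr0 hr1 hrS using hpick
  have hrt : Tendsto r atTop (𝓝 0) := tendsto_of_small hr0 hr1
  set An : ℕ → Matrix (Fin k) (Fin k) ℂ := fun n => A - (r n : ℂ) • 1 with hAn
  have hunit : ∀ n, IsUnit (An n) := by
    intro n
    rw [Matrix.isUnit_iff_isUnit_det, isUnit_iff_ne_zero]
    exact fun h => hrS n h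
  have htend : Tendsto (fun n => ((An n, B) : Matrix (Fin k) (Fin k) ℂ × _)) atTop (𝓝 (A, B)) := by
    have h1 : Tendsto (fun n => ((r n : ℝ) : ℂ)) atTop (𝓝 0) := by
      simpa [Function.comp_def] using (Complex.continuous_ofReal.tendsto 0).comp hrt
    have h2 : Tendsto An atTop (𝓝 A) := by
      have hc : Continuous (fun c : ℂ => A - c • (1 : Matrix (Fin k) (Fin k) ℂ)) :=
        continuous_const.sub (continuous_id.smul continuous_const)
      have := (hc.tendsto 0).comp h1
      simpa only [Function.comp_def, zero_smul, sub_zero] using this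
    exact h2.prodMk_nhds tendsto_const_nhds
  have hmem : ∀ n, (An n, B) ∈ closure (PairSet k) :=
    fun n => pair_dense_of_unit (An n) B (hunit n)
  have := mem_closure_of_tendsto htend (Filter.Eventually.of_forall hmem)
  rwa [closure_closure] at this


variable {m m12 : ℕ}

/-- collapsed form of the RHS sum -/
lemma S_sum_eq (ζ : Fin m → ℂ) (g1 g2 : Matrix (Fin (m * m12)) (Fin (m * m12)) ℂ)
    (a : Fin 2) (b c : Fin (m * m12)) :
    (∑ b' : Fin (m * m12), ∑ c' : Fin (m * m12),
        g1 b b' * g2 c c' * diagPencil m m12 ζ a b' c') =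
      ∑ p : Fin m × Fin m12, g1 b (finProdFinEquiv p) * g2 c (finProdFinEquiv p) *
        (if a = 0 then 1 else ζ p.1) := by
  have h1 : ∀ b' : Fin (m * m12), (∑ c' : Fin (m * m12),
      g1 b b' * g2 c c' * diagPencil m m12 ζ a b' c') =
      g1 b b' * g2 c b' * (if a = 0 then 1 else ζ (finProdFinEquiv.symm b').1) := by
    intro b'
    rw [Finset.sum_eq_single b']
    · simp [diagPencil]
    · intro c' _ hc'
      simp [diagPencil, Ne.symm hc']
    · intro h; exact absurd (Finset.mem_univ b') h
  simp only [h1]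
  rw [← Equiv.sum_comp finProdFinEquiv
    (fun b' => g1 b b' * g2 c b' * (if a = 0 then 1 else ζ (finProdFinEquiv.symm b').1))]
  apply Finset.sum_congr rfl
  intro p _
  rw [Equiv.symm_apply_apply]

lemma easy_dir (T : Fin 2 → Fin (m * m12) → Fin (m * m12) → ℂ)
    (ζ : Fin m → ℂ) (g1 g2 : Matrix (Fin (m * m12)) (Fin (m * m12)) ℂ)
    (hT : ∀ a b c, T a b c =
      ∑ b' : Fin (m * m12), ∑ c' : Fin (m * m12),
        g1 b b' * g2 c c' * diagPencil m m12 ζ a b' c') :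
    T ∈ tnsSet m m12 m 2 (m * m12) (m * m12) := by
  refine ⟨fun a p => if p.1 = p.2 then (if a = 0 then 1 else ζ p.1) else 0,
    fun b p => g1 b (finProdFinEquiv p),
    fun c p => g2 c (finProdFinEquiv (p.2, p.1)), ?_⟩
  intro a b c
  rw [hT, S_sum_eq]
  rw [Fintype.sum_prod_type]
  apply Finset.sum_congr rfl
  intro i _
  apply Finset.sum_congr rfl
  intro j _
  rw [Finset.sum_eq_single i]
  · simp only [eq_self_iff_true, if_true]; ring
  · intro k _ hk
    simp [Ne.symm hk]
  · intro h; exact absurd (Finset.mem_univ i) h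

def SGood (m m12 : ℕ) : Set (Fin 2 → Fin (m * m12) → Fin (m * m12) → ℂ) :=
  {T | ∃ (ζ : Fin m → ℂ) (g1 g2 : Matrix (Fin (m * m12)) (Fin (m * m12)) ℂ),
      ∀ a b c, T a b c =
        ∑ b' : Fin (m * m12), ∑ c' : Fin (m * m12),
          g1 b b' * g2 c c' * diagPencil m m12 ζ a b' c'}

/-- sum reordering helper -/
lemma sum_reorder (F : Fin m → Fin m12 → Fin m → Fin m → ℂ) :
    (∑ i, ∑ j, ∑ k, ∑ i', F i j k i') = ∑ i', ∑ j, ∑ i, ∑ k, F i j k i' := by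
  calc (∑ i, ∑ j, ∑ k, ∑ i', F i j k i')
      = ∑ i, ∑ j, ∑ i', ∑ k, F i j k i' := by
        refine Finset.sum_congr rfl fun i _ => Finset.sum_congr rfl fun j _ => ?_
        exact Finset.sum_comm
    _ = ∑ i, ∑ i', ∑ j, ∑ k, F i j k i' := by
        refine Finset.sum_congr rfl fun i _ => ?_
        exact Finset.sum_comm
    _ = ∑ i', ∑ i, ∑ j, ∑ k, F i j k i' := Finset.sum_comm
    _ = ∑ i', ∑ j, ∑ i, ∑ k, F i j k i' := by
        refine Finset.sum_congr rfl fun i' _ => ?_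
        exact Finset.sum_comm

lemma hard_dir (T : Fin 2 → Fin (m * m12) → Fin (m * m12) → ℂ)
    (hT : T ∈ tnsSet m m12 m 2 (m * m12) (m * m12)) :
    T ∈ closure (SGood m m12) := by
  obtain ⟨X0, X1, X2, hT⟩ := hT
  set F : Matrix (Fin m) (Fin m) ℂ × Matrix (Fin m) (Fin m) ℂ →
      (Fin 2 → Fin (m * m12) → Fin (m * m12) → ℂ) := fun p a b c =>
    ∑ i : Fin m, ∑ j : Fin m12, ∑ k : Fin m,
      (if a = 0 then p.1 else p.2) i k * X1 b (i, j) * X2 c (j, k) with hF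
  have hFT : F (Matrix.of fun i k => X0 0 (i, k), Matrix.of fun i k => X0 1 (i, k)) = T := by
    funext a b c
    rw [hT]
    apply Finset.sum_congr rfl; intro i _
    apply Finset.sum_congr rfl; intro j _
    apply Finset.sum_congr rfl; intro k _
    congr 2
    fin_cases a <;> simp
  have hcont : Continuous F := by
    apply continuous_pi; intro a
    apply continuous_pi; intro b
    apply continuous_pi; intro c
    refine continuous_finset_sum _ fun i _ => continuous_finset_sum _ fun j _ =>
      continuous_finset_sum _ fun k _ => ?_
    by_cases ha : a = 0 <;> simp only [ha, if_true, if_false, reduceIte]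
    · exact ((continuous_fst.matrix_elem i k).mul
        continuous_const).mul continuous_const
    · exact ((continuous_snd.matrix_elem i k).mul
        continuous_const).mul continuous_const
  have himg : F '' PairSet m ⊆ SGood m m12 := by
    rintro _ ⟨p, ⟨Q, R, d, rfl⟩, rfl⟩
    set g1 : Matrix (Fin (m * m12)) (Fin (m * m12)) ℂ :=
      fun b b' => ∑ i, X1 b (i, (finProdFinEquiv.symm b').2) * Q i (finProdFinEquiv.symm b').1
      with hg1
    set g2 : Matrix (Fin (m * m12)) (Fin (m * m12)) ℂ :=
      fun c c' => ∑ k, R (finProdFinEquiv.symm c').1 k * X2 c ((finProdFinEquiv.symm c').2, k)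
      with hg2
    refine ⟨d, g1, g2, ?_⟩
    intro a b c
    refine Eq.trans ?_ (S_sum_eq d g1 g2 a b c).symm
    simp only [hg1, hg2, Equiv.symm_apply_apply]
    have hM : (if a = 0 then Q * R else Q * Matrix.diagonal d * R) =
        Q * Matrix.diagonal (fun i => if a = 0 then 1 else d i) * R := by
      by_cases ha : a = 0 <;> simp [ha, Matrix.diagonal_one]
    have hentry : ∀ i k, (Q * Matrix.diagonal (fun i => if a = 0 then 1 else d i) * R) i k =
        ∑ i', Q i i' * (if a = 0 then 1 else d i') * R i' k := by
      intro i k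
      rw [Matrix.mul_apply]
      apply Finset.sum_congr rfl; intro i' _
      rw [Matrix.mul_diagonal]
    have hL : F (Q * R, Q * Matrix.diagonal d * R) a b c =
        ∑ i, ∑ j, ∑ k, ∑ i',
          Q i i' * (if a = 0 then 1 else d i') * R i' k * X1 b (i, j) * X2 c (j, k) := by
      rw [hF]
      apply Finset.sum_congr rfl; intro i _
      apply Finset.sum_congr rfl; intro j _
      apply Finset.sum_congr rfl; intro k _
      have h2 : (if a = 0 then Q * R else Q * Matrix.diagonal d * R) i k =
          ∑ i', Q i i' * (if a = 0 then 1 else d i') * R i' k := by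
        rw [← hentry]; congr 1; exact congrFun (congrFun hM i) k
      rw [h2, Finset.sum_mul, Finset.sum_mul]
    rw [hL, sum_reorder, Fintype.sum_prod_type]
    apply Finset.sum_congr rfl; intro i' _
    apply Finset.sum_congr rfl; intro j _
    rw [Finset.sum_mul_sum, Finset.sum_mul]
    apply Finset.sum_congr rfl; intro i _
    rw [Finset.sum_mul]
    apply Finset.sum_congr rfl; intro k _
    ring
  have hpd := pair_dense (Matrix.of fun i k => X0 0 (i, k)) (Matrix.of fun i k => X0 1 (i, k))
  have := Set.mem_image_of_mem F hpd
  rw [hFT] at this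
  exact closure_mono himg (image_closure_subset_closure_image hcont this)


end TNSAux

/-- Normal form for the critical triangle tensor network variety with an `(m,2,m)` corner. -/
theorem tns_critical_normal_form (m m12 : ℕ) (hm : 0 < m) (hm12 : 0 < m12) :
    TNS m m12 m 2 (m * m12) (m * m12) =
      closure {T : Fin 2 → Fin (m * m12) → Fin (m * m12) → ℂ |
        ∃ (ζ : Fin m → ℂ) (g1 g2 : Matrix (Fin (m * m12)) (Fin (m * m12)) ℂ),
          ∀ a b c, T a b c =
            ∑ b' : Fin (m * m12), ∑ c' : Fin (m * m12),
              g1 b b' * g2 c c' * diagPencil m m12 ζ a b' c'} := by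
  apply Set.Subset.antisymm
  · exact closure_minimal (fun T hT => TNSAux.hard_dir T hT) isClosed_closure
  · refine closure_mono ?_
    rintro T ⟨ζ, g1, g2, h⟩
    exact TNSAux.easy_dir T ζ g1 g2 h
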